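/- For every path α in a partial HDA X there exists a sparse path β in X such that src(β) = src(α), tgt(β) = tgt(α), and β recognizes the same ipomset as α. -/

import Mathlib

open scoped Classical

namespace HDA

/-! ### Ipomsets over a fixed alphabet -/

structure PreIpomset (σ : Type) : Type 1 where
  carrier : Type
  fin : Finite carrier
  lt : carrier → carrier → Prop
  evord : carrier → carrier → Prop
  S : Set carrier
  T : Set carrier
  lab : carrier → σ

namespace PreIpomset

variable {σ : Type}

/-- The precedence order is empty. -/
def Discrete (P : PreIpomset σ) : Prop := ∀ x y, ¬ P.lt x y

/-- Validity: `lt` is a strict partial order which is an interval order, `evord` is acyclic,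
for distinct events exactly one of the four relations holds, sources are minimal and
targets are maximal.  (All ipomsets considered are interval.) -/
structure IsIpomset (P : PreIpomset σ) : Prop where
  lt_trans : ∀ x y z, P.lt x y → P.lt y z → P.lt x z
  lt_irrefl : ∀ x, ¬ P.lt x x
  evord_acyclic : ∀ x, ¬ Relation.TransGen P.evord x x
  total : ∀ x y : P.carrier, x ≠ y → P.lt x y ∨ P.lt y x ∨ P.evord x y ∨ P.evord y x
  lt_not_evord : ∀ x y, P.lt x y → ¬ P.evord x y ∧ ¬ P.evord y x
  src_min : ∀ x ∈ P.S, ∀ y, ¬ P.lt y x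
  tgt_max : ∀ x ∈ P.T, ∀ y, ¬ P.lt x y
  interval : ∀ w x y z, P.lt w x → P.lt y z → P.lt w z ∨ P.lt y x

/-- A conclist: a discrete ipomset with empty interfaces. -/
def IsConclist (P : PreIpomset σ) : Prop :=
  P.IsIpomset ∧ P.Discrete ∧ P.S = ∅ ∧ P.T = ∅

/-- A starter `⟨U∖A,U,U⟩`. -/
def IsStarter (P : PreIpomset σ) : Prop := P.IsIpomset ∧ P.Discrete ∧ P.T = Set.univ

/-- A terminator `⟨U,U,U∖B⟩`. -/
def IsTerminator (P : PreIpomset σ) : Prop := P.IsIpomset ∧ P.Discrete ∧ P.S = Set.univ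

/-- An identity `⟨U,U,U⟩`. -/
def IsIdentityIpomset (P : PreIpomset σ) : Prop :=
  P.IsIpomset ∧ P.Discrete ∧ P.S = Set.univ ∧ P.T = Set.univ

def IsProperStarter (P : PreIpomset σ) : Prop := P.IsStarter ∧ P.S ≠ Set.univ

def IsProperTerminator (P : PreIpomset σ) : Prop := P.IsTerminator ∧ P.T ≠ Set.univ

/-- Isomorphism of (pre)ipomsets. -/
def Iso (P Q : PreIpomset σ) : Prop :=
  ∃ f : P.carrier ≃ Q.carrier,
    (∀ x y, P.lt x y ↔ Q.lt (f x) (f y)) ∧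
    (∀ x y, P.evord x y ↔ Q.evord (f x) (f y)) ∧
    (∀ x, x ∈ P.S ↔ f x ∈ Q.S) ∧
    (∀ x, x ∈ P.T ↔ f x ∈ Q.T) ∧
    (∀ x, Q.lab (f x) = P.lab x)

/-- Restriction to a subset of events, with empty interfaces. -/
def restrict (P : PreIpomset σ) (K : Set P.carrier) : PreIpomset σ where
  carrier := {x : P.carrier // x ∈ K}
  fin := by haveI := P.fin; exact inferInstance
  lt := fun x y => P.lt x.val y.val
  evord := fun x y => P.evord x.val y.val
  S := ∅
  T := ∅
  lab := fun x => P.lab x.val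

/-- The source interface of `P` as a conclist. -/
def srcIface (P : PreIpomset σ) : PreIpomset σ := P.restrict P.S

/-- The target interface of `P` as a conclist. -/
def tgtIface (P : PreIpomset σ) : PreIpomset σ := P.restrict P.T

/-- The underlying conclist (forget interfaces). -/
def conclistOf (P : PreIpomset σ) : PreIpomset σ := { P with S := ∅, T := ∅ }

/-- The identity ipomset `⟨U,U,U⟩` on the conclist underlying `P`. -/
def idOf (P : PreIpomset σ) : PreIpomset σ := { P with S := Set.univ, T := Set.univ }

/-- The discrete ipomset `⟨S,U,T⟩` on the conclist underlying `P`. -/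
def withIfaces (P : PreIpomset σ) (S T : Set P.carrier) : PreIpomset σ :=
  { P with S := S, T := T }

/-- The starter `⟨U∖A,U,U⟩` on the conclist underlying `P`. -/
def starter (P : PreIpomset σ) (A : Set P.carrier) : PreIpomset σ :=
  { P with S := Aᶜ, T := Set.univ }

/-- The terminator `⟨U,U,U∖B⟩` on the conclist underlying `P`. -/
def terminator (P : PreIpomset σ) (B : Set P.carrier) : PreIpomset σ :=
  { P with S := Set.univ, T := Bᶜ }

/-- A matching `T_P ≅ S_Q`, i.e. an isomorphism of interface conclists
along which `P` and `Q` may be glued. -/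
structure Matching (P Q : PreIpomset σ) : Type where
  g : {x : P.carrier // x ∈ P.T} ≃ {y : Q.carrier // y ∈ Q.S}
  evord_iff : ∀ x y, P.evord x.val y.val ↔ Q.evord (g x).val (g y).val
  lab_eq : ∀ x, Q.lab (g x).val = P.lab x.val

def gluePOf (P Q : PreIpomset σ) :
    P.carrier ⊕ {y : Q.carrier // y ∉ Q.S} → Option P.carrier
  | Sum.inl x => some x
  | Sum.inr _ => none

noncomputable def glueQOf (P Q : PreIpomset σ) (m : Matching P Q) :
    P.carrier ⊕ {y : Q.carrier // y ∉ Q.S} → Option Q.carrier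
  | Sum.inl x => if h : x ∈ P.T then some (m.g ⟨x, h⟩).val else none
  | Sum.inr y => some y.val

/-- The gluing `P * Q` along a matching `T_P ≅ S_Q`. -/
noncomputable def glue (P Q : PreIpomset σ) (m : Matching P Q) : PreIpomset σ where
  carrier := P.carrier ⊕ {y : Q.carrier // y ∉ Q.S}
  fin := by haveI := P.fin; haveI := Q.fin; exact inferInstance
  lt := fun u v =>
    (∃ x x', gluePOf P Q u = some x ∧ gluePOf P Q v = some x' ∧ P.lt x x') ∨
    (∃ y y', glueQOf P Q m u = some y ∧ glueQOf P Q m v = some y' ∧ Q.lt y y') ∨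
    ((∃ x, gluePOf P Q u = some x ∧ x ∉ P.T) ∧
     (∃ y, glueQOf P Q m v = some y ∧ y ∉ Q.S))
  evord := fun u v =>
    (∃ x x', gluePOf P Q u = some x ∧ gluePOf P Q v = some x' ∧ P.evord x x') ∨
    (∃ y y', glueQOf P Q m u = some y ∧ glueQOf P Q m v = some y' ∧ Q.evord y y')
  S := {u | ∃ x, gluePOf P Q u = some x ∧ x ∈ P.S}
  T := {u | ∃ y, glueQOf P Q m u = some y ∧ y ∈ Q.T}
  lab := Sum.elim P.lab fun y => Q.lab y.val

/-- `R` is (isomorphic to) the gluing `P * Q`; in particular `T_P ≅ S_Q`. -/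
def GlueRel (P Q R : PreIpomset σ) : Prop :=
  ∃ m : Matching P Q, Iso (glue P Q m) R

/-- A choice of gluing (used when a matching is known to exist). -/
noncomputable def glueChoice (P Q : PreIpomset σ) : PreIpomset σ :=
  if h : Nonempty (Matching P Q) then glue P Q h.some else P

/-- `GluesTo l R`: `R` is the gluing of the nonempty list `l` of ipomsets. -/
inductive GluesTo : List (PreIpomset σ) → PreIpomset σ → Prop
  | single {P R : PreIpomset σ} : Iso P R → GluesTo [P] R
  | cons {P : PreIpomset σ} {l : List (PreIpomset σ)} {R' R : PreIpomset σ} :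
      GluesTo l R' → GlueRel P R' R → GluesTo (P :: l) R

/-- Proper starters and proper terminators alternate. -/
def Alternating (l : List (PreIpomset σ)) : Prop :=
  l.Chain' fun P Q => (IsProperStarter P ∧ IsProperTerminator Q) ∨
    (IsProperTerminator P ∧ IsProperStarter Q)

/-- `l` is a sparse step decomposition of `R`: either a single identity, or an
alternating sequence of proper starters and proper terminators gluing to `R`. -/
def IsSparseDecomp (l : List (PreIpomset σ)) (R : PreIpomset σ) : Prop :=
  GluesTo l R ∧
  ((∃ I, l = [I] ∧ IsIdentityIpomset I) ∨
   ((∀ P ∈ l, IsProperStarter P ∨ IsProperTerminator P) ∧ Alternating l))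

/-- `P ∈ iPoms^q`: the sparse step decomposition of `P` does not end with a
proper starter (i.e. it ends with a terminator or is a single identity). -/
def InQ (P : PreIpomset σ) : Prop :=
  ∃ l, IsSparseDecomp l P ∧ ∀ Q, l.getLast? = some Q → ¬ IsProperStarter Q

end PreIpomset

open PreIpomset

variable {σ : Type}

/-! ### Languages and rational operations -/

def glueLang (L M : Set (PreIpomset σ)) : Set (PreIpomset σ) :=
  {R | ∃ P ∈ L, ∃ Q ∈ M, GlueRel P Q R}

def powLang (L : Set (PreIpomset σ)) : ℕ → Set (PreIpomset σ)
  | 0 => L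
  | n + 1 => glueLang L (powLang L n)

/-- `L⁺ = ⋃_{n ≥ 1} Lⁿ`. -/
def plusLang (L : Set (PreIpomset σ)) : Set (PreIpomset σ) := ⋃ n, powLang L n

/-- Rational languages of (interval) ipomsets: generated from `∅` and singletons
(up to isomorphism) of starters and terminators by union, gluing composition and plus. -/
inductive Rational : Set (PreIpomset σ) → Prop
  | empty : Rational ∅
  | single {P : PreIpomset σ} : IsStarter P ∨ IsTerminator P → Rational {Q | Iso Q P}
  | union {L M : Set (PreIpomset σ)} : Rational L → Rational M → Rational (L ∪ M)
  | concat {L M : Set (PreIpomset σ)} : Rational L → Rational M → Rational (glueLang L M)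
  | plus {L : Set (PreIpomset σ)} : Rational L → Rational (plusLang L)

/-! ### P-automata -/

structure PAutomaton (σ : Type) : Type 1 where
  Q : Type
  E : Type
  src : E → Q
  tgt : E → Q
  lab : E → PreIpomset σ
  mu : Q → PreIpomset σ
  start : Set Q
  accept : Set Q

namespace PAutomaton

variable {σ : Type}

/-- The axioms of a P-automaton: finite sets of states and transitions, states
labelled by conclists, transitions by interval ipomsets, with
`μ(s(e)) ≅ S_{λ(e)}` and `μ(t(e)) ≅ T_{λ(e)}`. -/
def IsPA (A : PAutomaton σ) : Prop :=
  Finite A.Q ∧ Finite A.E ∧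
  (∀ q, (A.mu q).IsConclist) ∧ (∀ e, (A.lab e).IsIpomset) ∧
  (∀ e, Iso (A.lab e).srcIface (A.mu (A.src e))) ∧
  (∀ e, Iso (A.lab e).tgtIface (A.mu (A.tgt e)))

/-- ST-automaton: every label is a starter or a terminator. -/
def IsST (A : PAutomaton σ) : Prop := ∀ e, IsStarter (A.lab e) ∨ IsTerminator (A.lab e)

/-- gST-automaton: every label is discrete. -/
def IsGST (A : PAutomaton σ) : Prop := ∀ e, (A.lab e).Discrete

/-- No transition is labelled by an identity. -/
def NoSilent (A : PAutomaton σ) : Prop := ∀ e, ¬ IsIdentityIpomset (A.lab e)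

/-- A reduced gST-automaton: no silent transitions and conditions (a)–(f). -/
def Reduced (A : PAutomaton σ) : Prop :=
  NoSilent A ∧
  (∀ e, A.tgt e ∉ A.start) ∧
  (∀ e, A.src e ∉ A.accept) ∧
  (∀ e, (A.lab e).T = Set.univ → A.tgt e ∈ A.accept) ∧
  (∀ e, (A.lab e).S = Set.univ → A.src e ∈ A.start) ∧
  (∀ e e', A.src e ∈ A.start → A.src e' = A.src e → e' = e) ∧
  (∀ e e', A.tgt e ∈ A.accept → A.tgt e' = A.tgt e → e' = e)

/-- Paths in a P-automaton, from a state to a state. -/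
inductive Path (A : PAutomaton σ) : A.Q → A.Q → Type
  | nil (q : A.Q) : Path A q q
  | cons (e : A.E) {r : A.Q} (rest : Path A (A.tgt e) r) : Path A (A.src e) r

/-- The (interval) ipomset recognized by a path, up to isomorphism:
the gluing of the labels of its transitions (an identity for a constant path). -/
inductive Rec {A : PAutomaton σ} : ∀ {p r : A.Q}, Path A p r → PreIpomset σ → Prop
  | nil (q : A.Q) (R : PreIpomset σ) : Iso (A.mu q).idOf R → Rec (Path.nil q) R
  | cons (e : A.E) {r : A.Q} (rest : Path A (A.tgt e) r) {R' R : PreIpomset σ} :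
      Rec rest R' → GlueRel (A.lab e) R' R → Rec (Path.cons e rest) R

/-- The language of a P-automaton. -/
def lang (A : PAutomaton σ) : Set (PreIpomset σ) :=
  {R | ∃ p r, ∃ α : Path A p r, p ∈ A.start ∧ r ∈ A.accept ∧ Rec α R}

/-- Dimension of a transition. -/
noncomputable def dim (A : PAutomaton σ) (e : A.E) : ℕ := Nat.card (A.lab e).carrier

/-- Number of bad starter transitions of dimension `n`. -/
noncomputable def bst (A : PAutomaton σ) (n : ℕ) : ℕ :=
  Nat.card {e : A.E // IsProperStarter (A.lab e) ∧ A.tgt e ∉ A.accept ∧ A.dim e = n}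

/-- Number of bad terminator transitions of dimension `n`. -/
noncomputable def btt (A : PAutomaton σ) (n : ℕ) : ℕ :=
  Nat.card {e : A.E // IsProperTerminator (A.lab e) ∧ A.src e ∉ A.start ∧ A.dim e = n}

/-- The automaton `𝒜_c`: remove the starter transition `c`; for every transition `e`
out of `t(c)` add a transition `e*` from `s(c)` to `t(e)` labelled `λ(c) * λ(e)`. -/
noncomputable def Ac (A : PAutomaton σ) (c : A.E) : PAutomaton σ where
  Q := A.Q
  E := {e : A.E // e ≠ c} ⊕ {e : A.E // A.src e = A.tgt c}
  src := Sum.elim (fun e => A.src e.val) fun _ => A.src c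
  tgt := Sum.elim (fun e => A.tgt e.val) fun e => A.tgt e.val
  lab := Sum.elim (fun e => A.lab e.val) fun e => glueChoice (A.lab c) (A.lab e.val)
  mu := A.mu
  start := A.start
  accept := A.accept

/-- Disjoint union of two P-automata. -/
def sumAut (A B : PAutomaton σ) : PAutomaton σ where
  Q := A.Q ⊕ B.Q
  E := A.E ⊕ B.E
  src := Sum.elim (Sum.inl ∘ A.src) (Sum.inr ∘ B.src)
  tgt := Sum.elim (Sum.inl ∘ A.tgt) (Sum.inr ∘ B.tgt)
  lab := Sum.elim A.lab B.lab
  mu := Sum.elim A.mu B.mu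
  start := Sum.inl '' A.start ∪ Sum.inr '' B.start
  accept := Sum.inl '' A.accept ∪ Sum.inr '' B.accept

/-- Concatenation `𝒜 * ℬ`: disjoint union together with identity-labelled transitions
from accepting states of `𝒜` to initial states of `ℬ` with isomorphic state labels. -/
def concatAut (A B : PAutomaton σ) : PAutomaton σ where
  Q := A.Q ⊕ B.Q
  E := A.E ⊕ B.E ⊕
    {pq : A.Q × B.Q // pq.1 ∈ A.accept ∧ pq.2 ∈ B.start ∧ Iso (A.mu pq.1) (B.mu pq.2)}
  src := Sum.elim (Sum.inl ∘ A.src)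
    (Sum.elim (Sum.inr ∘ B.src) fun pq => Sum.inl pq.val.1)
  tgt := Sum.elim (Sum.inl ∘ A.tgt)
    (Sum.elim (Sum.inr ∘ B.tgt) fun pq => Sum.inr pq.val.2)
  lab := Sum.elim A.lab (Sum.elim B.lab fun pq => (A.mu pq.val.1).idOf)
  mu := Sum.elim A.mu B.mu
  start := Sum.inl '' A.start
  accept := Sum.inr '' B.accept

/-- Kleene plus `𝒜⁺`: add identity-labelled transitions from accepting states
to initial states with isomorphic state labels. -/
def plusAut (A : PAutomaton σ) : PAutomaton σ where
  Q := A.Q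
  E := A.E ⊕
    {pq : A.Q × A.Q // pq.1 ∈ A.accept ∧ pq.2 ∈ A.start ∧ Iso (A.mu pq.1) (A.mu pq.2)}
  src := Sum.elim A.src fun pq => pq.val.1
  tgt := Sum.elim A.tgt fun pq => pq.val.2
  lab := Sum.elim A.lab fun pq => (A.mu pq.val.1).idOf
  mu := A.mu
  start := A.start
  accept := A.accept

end PAutomaton

/-! ### Partial HDAs -/

/-- `g` exhibits `V` as the sub-conclist of `U` obtained by removing the events in `K`. -/
def IsFaceEmbed (U : PreIpomset σ) (K : Set U.carrier) (V : PreIpomset σ)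
    (g : V.carrier → U.carrier) : Prop :=
  Function.Injective g ∧ Set.range g = Kᶜ ∧
  (∀ u v, V.evord u v ↔ U.evord (g u) (g v)) ∧
  (∀ u, U.lab (g u) = V.lab u)

/-- The data of a partial higher-dimensional automaton: cells labelled by conclists,
partial face maps, initial and accepting cells. -/
structure PrePHDA (σ : Type) : Type 1 where
  cell : Type
  ev : cell → PreIpomset σ
  face : (x : cell) → Set (ev x).carrier → Set (ev x).carrier → Option cell
  start : Set cell
  accept : Set cell

namespace PrePHDA

variable {σ : Type}

/-- The lax precubical identity: whenever `δ_{A,B}(x)` and `δ_{C,D}(δ_{A,B}(x))` are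
defined, `δ_{A∪C,B∪D}(x)` is defined and equal to the composite. -/
def IsLax (X : PrePHDA σ) : Prop :=
  ∀ x (A B : Set (X.ev x).carrier) y, X.face x A B = some y →
    ∀ g, IsFaceEmbed (X.ev x) (A ∪ B) (X.ev y) g →
      ∀ (C D : Set (X.ev y).carrier) z, X.face y C D = some z →
        X.face x (A ∪ g '' C) (B ∪ g '' D) = some z

/-- The axioms of a partial HDA. -/
def IsPHDA (X : PrePHDA σ) : Prop :=
  (∀ x, (X.ev x).IsConclist) ∧
  (∀ x, X.face x ∅ ∅ = some x) ∧
  (∀ x A B y, X.face x A B = some y →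
    Disjoint A B ∧ ∃ g, IsFaceEmbed (X.ev x) (A ∪ B) (X.ev y) g) ∧
  IsLax X

/-- Strictness: `δ_{C,D} ∘ δ_{A,B} = δ_{A∪C,B∪D}` as partial functions. -/
def IsStrict (X : PrePHDA σ) : Prop :=
  IsPHDA X ∧
  (∀ x (A B : Set (X.ev x).carrier) y, X.face x A B = some y →
    ∀ g, IsFaceEmbed (X.ev x) (A ∪ B) (X.ev y) g →
      ∀ C D : Set (X.ev y).carrier,
        X.face x (A ∪ g '' C) (B ∪ g '' D) = X.face y C D) ∧
  (∀ x (A B C D : Set (X.ev x).carrier),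
    Disjoint (A ∪ C) (B ∪ D) → C ∪ D ⊆ (A ∪ B)ᶜ →
    X.face x A B = none → X.face x (A ∪ C) (B ∪ D) = none)

/-- Paths in a partial HDA: sequences of upsteps and downsteps. -/
inductive Path (X : PrePHDA σ) : X.cell → X.cell → Type
  | nil (x : X.cell) : Path X x x
  | up {x z : X.cell} (y : X.cell) (A : Set (X.ev y).carrier)
      (h : X.face y A ∅ = some x) (rest : Path X y z) : Path X x z
  | down {z w : X.cell} (y : X.cell) (B : Set (X.ev y).carrier)
      (h : X.face y ∅ B = some z) (rest : Path X z w) : Path X y w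

/-- Directions of the steps of a path (`true` = upstep). -/
def Path.dirs {X : PrePHDA σ} : {x z : X.cell} → Path X x z → List Bool
  | _, _, .nil _ => []
  | _, _, .up _ _ _ rest => true :: rest.dirs
  | _, _, .down _ _ _ rest => false :: rest.dirs

/-- A path is sparse if upsteps and downsteps alternate. -/
def Path.Sparse {X : PrePHDA σ} {x z : X.cell} (α : Path X x z) : Prop :=
  α.dirs.Chain' (· ≠ ·)

/-- Concatenation of paths. -/
def Path.comp {X : PrePHDA σ} : {x y z : X.cell} → Path X x y → Path X y z → Path X x z
  | _, _, _, .nil _, β => β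
  | _, _, _, .up y A h rest, β => .up y A h (rest.comp β)
  | _, _, _, .down y B h rest, β => .down y B h (rest.comp β)

/-- The ipomset recognized by a path, up to isomorphism: the gluing of the starters
and terminators of its steps (an identity for a constant path). -/
inductive Rec {X : PrePHDA σ} : ∀ {x z : X.cell}, Path X x z → PreIpomset σ → Prop
  | nil (x : X.cell) (R : PreIpomset σ) :
      Iso (X.ev x).idOf R → Rec (Path.nil x) R
  | up {x z : X.cell} (y : X.cell) (A : Set (X.ev y).carrier)
      (h : X.face y A ∅ = some x) (rest : Path X y z) {R' R : PreIpomset σ} :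
      Rec rest R' → GlueRel ((X.ev y).starter A) R' R → Rec (Path.up y A h rest) R
  | down {z w : X.cell} (y : X.cell) (B : Set (X.ev y).carrier)
      (h : X.face y ∅ B = some z) (rest : Path X z w) {R' R : PreIpomset σ} :
      Rec rest R' → GlueRel ((X.ev y).terminator B) R' R → Rec (Path.down y B h rest) R

/-- The language of a partial HDA. -/
def lang (X : PrePHDA σ) : Set (PreIpomset σ) :=
  {R | ∃ x z, ∃ α : Path X x z, x ∈ X.start ∧ z ∈ X.accept ∧ Rec α R}

/-- `X(K,P)`: cells reachable from `K` by a path recognizing `P`. -/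
def track (X : PrePHDA σ) (K : Set X.cell) (P : PreIpomset σ) : Set X.cell :=
  {x | ∃ s, ∃ α : Path X s x, s ∈ K ∧ Rec α P}

/-- Deterministic partial HDA: at most one initial cell per conclist, and lower
face maps are "injective" in the appropriate sense. -/
def Deterministic (X : PrePHDA σ) : Prop :=
  (∀ x y, x ∈ X.start → y ∈ X.start → Iso (X.ev x) (X.ev y) → x = y) ∧
  (∀ (y y' : X.cell) (A : Set (X.ev y).carrier) (A' : Set (X.ev y').carrier)
      (x : X.cell), X.face y A ∅ = some x → X.face y' A' ∅ = some x →
    (∃ f : (X.ev y).carrier ≃ (X.ev y').carrier,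
      (∀ u v, (X.ev y).evord u v ↔ (X.ev y').evord (f u) (f v)) ∧
      (∀ u, (X.ev y').lab (f u) = (X.ev y).lab u) ∧ f '' A = A') → y = y')

end PrePHDA

/-! ### Relational HDAs -/

/-- The data of a relational HDA: face relations instead of partial face maps. -/
structure PreRHDA (σ : Type) : Type 1 where
  cell : Type
  ev : cell → PreIpomset σ
  face : (x : cell) → Set (ev x).carrier → Set (ev x).carrier → Set cell
  start : Set cell
  accept : Set cell

namespace PreRHDA

variable {σ : Type}

/-- The axioms of a relational HDA, with the lax precubical identity
`δ_{C,D} ∘ δ_{A,B} ⊆ δ_{A∪C,B∪D}`. -/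
def IsRHDA (X : PreRHDA σ) : Prop :=
  (∀ x, (X.ev x).IsConclist) ∧
  (∀ x, X.face x ∅ ∅ = {x}) ∧
  (∀ x A B y, y ∈ X.face x A B →
    Disjoint A B ∧ ∃ g, IsFaceEmbed (X.ev x) (A ∪ B) (X.ev y) g) ∧
  (∀ x (A B : Set (X.ev x).carrier) y, y ∈ X.face x A B →
    ∀ g, IsFaceEmbed (X.ev x) (A ∪ B) (X.ev y) g →
      ∀ (C D : Set (X.ev y).carrier) z, z ∈ X.face y C D →
        z ∈ X.face x (A ∪ g '' C) (B ∪ g '' D))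

/-- Paths in a relational HDA. -/
inductive Path (X : PreRHDA σ) : X.cell → X.cell → Type 1
  | nil (x : X.cell) : Path X x x
  | up {x z : X.cell} (y : X.cell) (A : Set (X.ev y).carrier)
      (h : x ∈ X.face y A ∅) (rest : Path X y z) : Path X x z
  | down {z w : X.cell} (y : X.cell) (B : Set (X.ev y).carrier)
      (h : z ∈ X.face y ∅ B) (rest : Path X z w) : Path X y w

/-- The ipomset recognized by a path in a relational HDA. -/
inductive Rec {X : PreRHDA σ} : ∀ {x z : X.cell}, Path X x z → PreIpomset σ → Prop
  | nil (x : X.cell) (R : PreIpomset σ) :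
      Iso (X.ev x).idOf R → Rec (Path.nil x) R
  | up {x z : X.cell} (y : X.cell) (A : Set (X.ev y).carrier)
      (h : x ∈ X.face y A ∅) (rest : Path X y z) {R' R : PreIpomset σ} :
      Rec rest R' → GlueRel ((X.ev y).starter A) R' R → Rec (Path.up y A h rest) R
  | down {z w : X.cell} (y : X.cell) (B : Set (X.ev y).carrier)
      (h : z ∈ X.face y ∅ B) (rest : Path X z w) {R' R : PreIpomset σ} :
      Rec rest R' → GlueRel ((X.ev y).terminator B) R' R → Rec (Path.down y B h rest) R

/-- The language of a relational HDA. -/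
def lang (X : PreRHDA σ) : Set (PreIpomset σ) :=
  {R | ∃ x z, ∃ α : Path X x z, x ∈ X.start ∧ z ∈ X.accept ∧ Rec α R}

/-- The ST-automaton `ST(X)` of a relational HDA `X`: states are cells, transitions
mimic the starting and terminating of events. -/
def stAut (X : PreRHDA σ) : PAutomaton σ where
  Q := X.cell
  E := (Σ q : X.cell, Σ A : Set (X.ev q).carrier, {p : X.cell // p ∈ X.face q A ∅}) ⊕
       (Σ q : X.cell, Σ B : Set (X.ev q).carrier, {r : X.cell // r ∈ X.face q ∅ B})
  src := Sum.elim (fun t => t.2.2.val) fun t => t.1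
  tgt := Sum.elim (fun t => t.1) fun t => t.2.2.val
  lab := Sum.elim (fun t => (X.ev t.1).starter t.2.1) fun t => (X.ev t.1).terminator t.2.1
  mu := X.ev
  start := X.start
  accept := X.accept

end PreRHDA

/-! ### The partial HDA of a reduced gST-automaton -/

open PAutomaton

/-- The cell representing a state `q` in `X(𝒜)`: `q` is merged with a terminator
transition out of it or a starter transition into it, if such exists. -/
noncomputable def cellOfState (A : PAutomaton σ) (q : A.Q) : A.E ⊕ A.Q :=
  if h : ∃ e, IsTerminator (A.lab e) ∧ A.src e = q then Sum.inl h.choose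
  else if h' : ∃ e, IsStarter (A.lab e) ∧ A.tgt e = q then Sum.inl h'.choose
  else Sum.inr q

/-- `X(𝒜)`: cells are `(Q ⊔ E)/∼`, with the only defined (nontrivial) face maps
`δ⁰_{U∖S}([e]) = [s(e)]` and `δ¹_{U∖T}([e]) = [t(e)]` for `λ(e) = ⟨S,U,T⟩`. -/
noncomputable def XofA (A : PAutomaton σ) : PrePHDA σ where
  cell := A.E ⊕ A.Q
  ev := Sum.elim (fun e => (A.lab e).conclistOf) A.mu
  face := fun x =>
    match x with
    | Sum.inl e => fun As Bs =>
        if As = ∅ ∧ Bs = ∅ then some (Sum.inl e)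
        else if As = (A.lab e).Sᶜ ∧ Bs = ∅ then some (cellOfState A (A.src e))
        else if As = ∅ ∧ Bs = (A.lab e).Tᶜ then some (cellOfState A (A.tgt e))
        else none
    | Sum.inr q => fun As Bs =>
        if As = ∅ ∧ Bs = ∅ then some (Sum.inr q) else none
  start := cellOfState A '' A.start
  accept := cellOfState A '' A.accept

end HDA

namespace HDA

open PreIpomset

section GlueHelpers

variable {σ : Type} {P Q : PreIpomset σ} (m : Matching P Q)

theorem PreIpomset.Iso.trans' {P Q R : PreIpomset σ} (h1 : Iso P Q) (h2 : Iso Q R) :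
    Iso P R := by
  obtain ⟨f, flt, fev, fS, fT, flab⟩ := h1
  obtain ⟨g, glt, gev, gS, gT, glab⟩ := h2
  refine ⟨f.trans g, ?_, ?_, ?_, ?_, ?_⟩ <;> intros <;>
    simp only [Equiv.trans_apply, flt, fev, fS, fT, flab, glt, gev, gS, gT, glab]

theorem gluePOf_inl (x : P.carrier) : gluePOf P Q (Sum.inl x) = some x := rfl

theorem gluePOf_inr (b : {y : Q.carrier // y ∉ Q.S}) :
    gluePOf P Q (Sum.inr b) = none := rfl

theorem glueQOf_inl (x : P.carrier) (h : x ∈ P.T) :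
    glueQOf P Q m (Sum.inl x) = some (m.g ⟨x, h⟩).val := dif_pos h

theorem glueQOf_inl_none (x : P.carrier) (h : x ∉ P.T) :
    glueQOf P Q m (Sum.inl x) = none := dif_neg h

theorem glueQOf_inr (b : {y : Q.carrier // y ∉ Q.S}) :
    glueQOf P Q m (Sum.inr b) = some b.val := rfl

theorem glue_lt_inl_inl (x x' : P.carrier) :
    (glue P Q m).lt (Sum.inl x) (Sum.inl x') ↔
      P.lt x x' ∨ ∃ (h : x ∈ P.T) (h' : x' ∈ P.T),
        Q.lt (m.g ⟨x, h⟩).val (m.g ⟨x', h'⟩).val := by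
  constructor
  · rintro (⟨a, a', ha, ha', hlt⟩ | ⟨b, b', hb, hb', hlt⟩ | ⟨⟨a, ha, haT⟩, ⟨b, hb, hbS⟩⟩)
    · simp only [gluePOf_inl, Option.some.injEq] at ha ha'
      subst ha; subst ha'; exact Or.inl hlt
    · by_cases hT : x ∈ P.T
      · by_cases hT' : x' ∈ P.T
        · rw [glueQOf_inl m x hT] at hb
          rw [glueQOf_inl m x' hT'] at hb'
          simp only [Option.some.injEq] at hb hb'
          subst hb; subst hb'; exact Or.inr ⟨hT, hT', hlt⟩
        · rw [glueQOf_inl_none m x' hT'] at hb'; cases hb'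
      · rw [glueQOf_inl_none m x hT] at hb; cases hb
    · by_cases hT' : x' ∈ P.T
      · rw [glueQOf_inl m x' hT'] at hb
        simp only [Option.some.injEq] at hb
        subst hb; exact absurd (m.g ⟨x', hT'⟩).property hbS
      · rw [glueQOf_inl_none m x' hT'] at hb; cases hb
  · rintro (hlt | ⟨h, h', hlt⟩)
    · exact Or.inl ⟨x, x', rfl, rfl, hlt⟩
    · exact Or.inr (Or.inl ⟨_, _, glueQOf_inl m x h, glueQOf_inl m x' h', hlt⟩)

theorem glue_lt_inl_inr (x : P.carrier) (b : {y : Q.carrier // y ∉ Q.S}) :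
    (glue P Q m).lt (Sum.inl x) (Sum.inr b) ↔
      (∃ (h : x ∈ P.T), Q.lt (m.g ⟨x, h⟩).val b.val) ∨ x ∉ P.T := by
  constructor
  · rintro (⟨a, a', ha, ha', hlt⟩ | ⟨c, c', hc, hc', hlt⟩ | ⟨⟨a, ha, haT⟩, ⟨d, hd, hdS⟩⟩)
    · cases ha'
    · by_cases hT : x ∈ P.T
      · rw [glueQOf_inl m x hT] at hc
        rw [glueQOf_inr] at hc'
        simp only [Option.some.injEq] at hc hc'
        subst hc; subst hc'; exact Or.inl ⟨hT, hlt⟩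
      · rw [glueQOf_inl_none m x hT] at hc; cases hc
    · simp only [gluePOf_inl, Option.some.injEq] at ha
      subst ha; exact Or.inr haT
  · rintro (⟨h, hlt⟩ | hT)
    · exact Or.inr (Or.inl ⟨_, _, glueQOf_inl m x h, glueQOf_inr m b, hlt⟩)
    · exact Or.inr (Or.inr ⟨⟨x, rfl, hT⟩, ⟨b.val, glueQOf_inr m b, b.property⟩⟩)

theorem glue_lt_inr_inl (b : {y : Q.carrier // y ∉ Q.S}) (x : P.carrier) :
    (glue P Q m).lt (Sum.inr b) (Sum.inl x) ↔
      ∃ (h : x ∈ P.T), Q.lt b.val (m.g ⟨x, h⟩).val := by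
  constructor
  · rintro (⟨a, a', ha, ha', hlt⟩ | ⟨c, c', hc, hc', hlt⟩ | ⟨⟨a, ha, haT⟩, ⟨d, hd, hdS⟩⟩)
    · cases ha
    · by_cases hT : x ∈ P.T
      · rw [glueQOf_inl m x hT] at hc'
        rw [glueQOf_inr] at hc
        simp only [Option.some.injEq] at hc hc'
        subst hc; subst hc'; exact ⟨hT, hlt⟩
      · rw [glueQOf_inl_none m x hT] at hc'; cases hc'
    · cases ha
  · rintro ⟨h, hlt⟩
    exact Or.inr (Or.inl ⟨_, _, glueQOf_inr m b, glueQOf_inl m x h, hlt⟩)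

theorem glue_lt_inr_inr (b b' : {y : Q.carrier // y ∉ Q.S}) :
    (glue P Q m).lt (Sum.inr b) (Sum.inr b') ↔ Q.lt b.val b'.val := by
  constructor
  · rintro (⟨a, a', ha, ha', hlt⟩ | ⟨c, c', hc, hc', hlt⟩ | ⟨⟨a, ha, haT⟩, ⟨d, hd, hdS⟩⟩)
    · cases ha
    · rw [glueQOf_inr] at hc hc'
      simp only [Option.some.injEq] at hc hc'
      subst hc; subst hc'; exact hlt
    · cases ha
  · intro hlt
    exact Or.inr (Or.inl ⟨_, _, glueQOf_inr m b, glueQOf_inr m b', hlt⟩)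

theorem glue_evord_inl_inl (x x' : P.carrier) :
    (glue P Q m).evord (Sum.inl x) (Sum.inl x') ↔ P.evord x x' := by
  constructor
  · rintro (⟨a, a', ha, ha', hev⟩ | ⟨c, c', hc, hc', hev⟩)
    · simp only [gluePOf_inl, Option.some.injEq] at ha ha'
      subst ha; subst ha'; exact hev
    · by_cases hT : x ∈ P.T
      · by_cases hT' : x' ∈ P.T
        · rw [glueQOf_inl m x hT] at hc
          rw [glueQOf_inl m x' hT'] at hc'
          simp only [Option.some.injEq] at hc hc'
          subst hc; subst hc'
          exact (m.evord_iff ⟨x, hT⟩ ⟨x', hT'⟩).2 hev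
        · rw [glueQOf_inl_none m x' hT'] at hc'; cases hc'
      · rw [glueQOf_inl_none m x hT] at hc; cases hc
  · intro hev
    exact Or.inl ⟨x, x', rfl, rfl, hev⟩

theorem glue_evord_inl_inr (x : P.carrier) (b : {y : Q.carrier // y ∉ Q.S}) :
    (glue P Q m).evord (Sum.inl x) (Sum.inr b) ↔
      ∃ (h : x ∈ P.T), Q.evord (m.g ⟨x, h⟩).val b.val := by
  constructor
  · rintro (⟨a, a', ha, ha', hev⟩ | ⟨c, c', hc, hc', hev⟩)
    · cases ha'
    · by_cases hT : x ∈ P.T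
      · rw [glueQOf_inl m x hT] at hc
        rw [glueQOf_inr] at hc'
        simp only [Option.some.injEq] at hc hc'
        subst hc; subst hc'; exact ⟨hT, hev⟩
      · rw [glueQOf_inl_none m x hT] at hc; cases hc
  · rintro ⟨h, hev⟩
    exact Or.inr ⟨_, _, glueQOf_inl m x h, glueQOf_inr m b, hev⟩

theorem glue_evord_inr_inl (b : {y : Q.carrier // y ∉ Q.S}) (x : P.carrier) :
    (glue P Q m).evord (Sum.inr b) (Sum.inl x) ↔
      ∃ (h : x ∈ P.T), Q.evord b.val (m.g ⟨x, h⟩).val := by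
  constructor
  · rintro (⟨a, a', ha, ha', hev⟩ | ⟨c, c', hc, hc', hev⟩)
    · cases ha
    · by_cases hT : x ∈ P.T
      · rw [glueQOf_inl m x hT] at hc'
        rw [glueQOf_inr] at hc
        simp only [Option.some.injEq] at hc hc'
        subst hc; subst hc'; exact ⟨hT, hev⟩
      · rw [glueQOf_inl_none m x hT] at hc'; cases hc'
  · rintro ⟨h, hev⟩
    exact Or.inr ⟨_, _, glueQOf_inr m b, glueQOf_inl m x h, hev⟩

theorem glue_evord_inr_inr (b b' : {y : Q.carrier // y ∉ Q.S}) :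
    (glue P Q m).evord (Sum.inr b) (Sum.inr b') ↔ Q.evord b.val b'.val := by
  constructor
  · rintro (⟨a, a', ha, ha', hev⟩ | ⟨c, c', hc, hc', hev⟩)
    · cases ha
    · rw [glueQOf_inr] at hc hc'
      simp only [Option.some.injEq] at hc hc'
      subst hc; subst hc'; exact hev
  · intro hev
    exact Or.inr ⟨_, _, glueQOf_inr m b, glueQOf_inr m b', hev⟩

theorem glue_S_inl (x : P.carrier) :
    Sum.inl x ∈ (glue P Q m).S ↔ x ∈ P.S := by
  constructor
  · rintro ⟨a, ha, haS⟩
    simp only [gluePOf_inl, Option.some.injEq] at ha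
    subst ha; exact haS
  · intro h; exact ⟨x, rfl, h⟩

theorem glue_S_inr (b : {y : Q.carrier // y ∉ Q.S}) :
    Sum.inr b ∉ (glue P Q m).S := by
  rintro ⟨a, ha, haS⟩; cases ha

theorem glue_T_inl (x : P.carrier) (h : x ∈ P.T) :
    Sum.inl x ∈ (glue P Q m).T ↔ (m.g ⟨x, h⟩).val ∈ Q.T := by
  constructor
  · rintro ⟨a, ha, haT⟩
    rw [glueQOf_inl m x h] at ha
    simp only [Option.some.injEq] at ha
    subst ha; exact haT
  · intro hT; exact ⟨_, glueQOf_inl m x h, hT⟩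

theorem glue_T_inl_not (x : P.carrier) (h : x ∉ P.T) :
    Sum.inl x ∉ (glue P Q m).T := by
  rintro ⟨a, ha, haT⟩
  rw [glueQOf_inl_none m x h] at ha; cases ha

theorem glue_T_inr (b : {y : Q.carrier // y ∉ Q.S}) :
    Sum.inr b ∈ (glue P Q m).T ↔ b.val ∈ Q.T := by
  constructor
  · rintro ⟨a, ha, haT⟩
    rw [glueQOf_inr] at ha
    simp only [Option.some.injEq] at ha
    subst ha; exact haT
  · intro hT; exact ⟨_, glueQOf_inr m b, hT⟩

theorem glue_lab_inl (x : P.carrier) : (glue P Q m).lab (Sum.inl x) = P.lab x := rfl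

theorem glue_lab_inr (b : {y : Q.carrier // y ∉ Q.S}) :
    (glue P Q m).lab (Sum.inr b) = Q.lab b.val := rfl

end GlueHelpers

end HDA

namespace HDA

open PreIpomset


section MergeFun

/-- Auxiliary map used to build isomorphisms when merging steps. -/
noncomputable def mergeFun {α β δ ε : Type} (g : α → β)
    (k : (u : β) → ¬(∃ v, g v = u) → ε) (j : δ → ε) : β ⊕ δ → α ⊕ ε
  | Sum.inl u => if h : ∃ v, g v = u then Sum.inl h.choose else Sum.inr (k u h)
  | Sum.inr b => Sum.inr (j b)

theorem mergeFun_g {α β δ ε : Type} {g : α → β} (hg : Function.Injective g)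
    (k : (u : β) → ¬(∃ v, g v = u) → ε) (j : δ → ε) (v : α) :
    mergeFun g k j (Sum.inl (g v)) = Sum.inl v := by
  have h : ∃ v', g v' = g v := ⟨v, rfl⟩
  simp only [mergeFun, dif_pos h]
  exact congrArg Sum.inl (hg h.choose_spec)

theorem mergeFun_nog {α β δ ε : Type} (g : α → β)
    (k : (u : β) → ¬(∃ v, g v = u) → ε) (j : δ → ε) (u : β) (h : ¬(∃ v, g v = u)) :
    mergeFun g k j (Sum.inl u) = Sum.inr (k u h) := by
  simp only [mergeFun, dif_neg h]

theorem mergeFun_inr {α β δ ε : Type} (g : α → β)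
    (k : (u : β) → ¬(∃ v, g v = u) → ε) (j : δ → ε) (b : δ) :
    mergeFun g k j (Sum.inr b) = Sum.inr (j b) := rfl

end MergeFun

section UpMerge

variable {σ : Type}

theorem up_merge {Uy Uy' R'' R' R : PreIpomset σ}
    (hDy : Uy.Discrete)
    (A : Set Uy.carrier) (C : Set Uy'.carrier)
    (hg1 : GlueRel (Uy.starter A) R' R) (hg2 : GlueRel (Uy'.starter C) R'' R') :
    ∃ g : Uy.carrier → Uy'.carrier,
      Function.Injective g ∧ Set.range g = Cᶜ ∧
      (∀ u v, Uy.evord u v ↔ Uy'.evord (g u) (g v)) ∧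
      (∀ u, Uy'.lab (g u) = Uy.lab u) ∧
      GlueRel (Uy'.starter (C ∪ g '' A)) R'' R := by
  obtain ⟨m1, e1, e1lt, e1ev, e1S, e1T, e1lab⟩ := hg1
  obtain ⟨m2, e2, e2lt, e2ev, e2S, e2T, e2lab⟩ := hg2
  have hT : ∀ v : Uy.carrier, v ∈ (Uy.starter A).T := fun v => Set.mem_univ v
  -- construct the face embedding g
  have hspec : ∀ v : Uy.carrier, ∃ u : Uy'.carrier,
      Sum.inl u = e2.symm ((m1.g ⟨v, hT v⟩).val) ∧ u ∉ C := by
    intro v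
    have hw : e2.symm ((m1.g ⟨v, hT v⟩).val) ∈ (glue (Uy'.starter C) R'' m2).S := by
      have h2 := e2S (e2.symm ((m1.g ⟨v, hT v⟩).val))
      rw [Equiv.apply_symm_apply] at h2
      exact h2.2 (m1.g ⟨v, hT v⟩).property
    obtain ⟨a, ha, haS⟩ := hw
    rcases hw' : e2.symm ((m1.g ⟨v, hT v⟩).val) with u | b
    · rw [hw'] at ha
      simp only [gluePOf_inl, Option.some.injEq] at ha
      subst ha
      exact ⟨u, rfl, haS⟩
    · rw [hw'] at ha; cases ha
  choose g hginl hgC using hspec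
  have hkey : ∀ v, e2 (Sum.inl (g v)) = (m1.g ⟨v, hT v⟩).val := by
    intro v
    erw [hginl v, Equiv.apply_symm_apply]
  have ginj : Function.Injective g := by
    intro v v' hvv
    have h1 : (m1.g ⟨v, hT v⟩).val = (m1.g ⟨v', hT v'⟩).val := by
      rw [← hkey, ← hkey, hvv]
    have h2 : m1.g ⟨v, hT v⟩ = m1.g ⟨v', hT v'⟩ := Subtype.ext h1
    have := m1.g.injective h2
    exact congrArg Subtype.val this
  have grange : Set.range g = Cᶜ := by
    ext u
    constructor
    · rintro ⟨v, rfl⟩; exact hgC v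
    · intro hu
      have h1 : Sum.inl u ∈ (glue (Uy'.starter C) R'' m2).S := (glue_S_inl m2 u).2 hu
      have h2 : e2 (Sum.inl u) ∈ R'.S := (e2S _).1 h1
      obtain ⟨s, hs⟩ := m1.g.surjective ⟨e2 (Sum.inl u), h2⟩
      refine ⟨s.val, ?_⟩
      have hs2 : m1.g ⟨s.val, hT s.val⟩ = ⟨e2 (Sum.inl u), h2⟩ := by
        rw [← hs]
      have h3 : e2 (Sum.inl (g s.val)) = e2 (Sum.inl u) := by
        erw [hkey, hs2]
      exact Sum.inl.inj (e2.injective h3)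
  have gev : ∀ u v, Uy.evord u v ↔ Uy'.evord (g u) (g v) := by
    intro u v
    have h1 := m1.evord_iff ⟨u, hT u⟩ ⟨v, hT v⟩
    have h2 := e2ev (Sum.inl (g u)) (Sum.inl (g v))
    rw [hkey, hkey] at h2
    have h3 := glue_evord_inl_inl m2 (g u) (g v)
    exact h1.trans (h2.symm.trans h3)
  have glab : ∀ u, Uy'.lab (g u) = Uy.lab u := by
    intro u
    have h1 := m1.lab_eq ⟨u, hT u⟩
    have h2 := e2lab (Sum.inl (g u))
    rw [hkey] at h2
    exact h2.symm.trans h1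
  refine ⟨g, ginj, grange, gev, glab, ⟨m2.g, m2.evord_iff, m2.lab_eq⟩, ?_⟩
  -- auxiliary facts
  have hpf1 : ∀ u : Uy'.carrier, ¬(∃ v, g v = u) → e2 (Sum.inl u) ∉ R'.S := by
    intro u h hmem
    have h1 : Sum.inl u ∈ ((Uy'.starter C).glue R'' m2).S := by
      have := e2S (Sum.inl u); exact this.2 hmem
    have h2 : u ∈ Cᶜ := (glue_S_inl m2 u).1 h1
    rw [← grange] at h2
    obtain ⟨v, hv⟩ := h2
    exact h ⟨v, hv⟩
  have hpf2 : ∀ b : {r : R''.carrier // r ∉ R''.S}, e2 (Sum.inr b) ∉ R'.S := by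
    intro b hmem
    exact glue_S_inr m2 b ((e2S _).2 hmem)
  set H : Uy'.carrier ⊕ {r : R''.carrier // r ∉ R''.S} →
      Uy.carrier ⊕ {r : R'.carrier // r ∉ R'.S} :=
    mergeFun g (fun u h => ⟨e2 (Sum.inl u), hpf1 u h⟩)
      (fun b => ⟨e2 (Sum.inr b), hpf2 b⟩) with hH
  have Hg : ∀ v, H (Sum.inl (g v)) = Sum.inl v := by
    intro v; rw [hH]; exact mergeFun_g ginj _ _ v
  have Hnog : ∀ u (h : ¬(∃ v, g v = u)),
      H (Sum.inl u) = Sum.inr ⟨e2 (Sum.inl u), hpf1 u h⟩ := by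
    intro u h; rw [hH]; exact mergeFun_nog _ _ _ u h
  have Hinr : ∀ b, H (Sum.inr b) = Sum.inr ⟨e2 (Sum.inr b), hpf2 b⟩ := by
    intro b; rw [hH]; exact mergeFun_inr _ _ _ b
  have hbij : Function.Bijective H := by
    constructor
    · rintro (u | b) (u' | b') hww
      · by_cases h : ∃ v, g v = u <;> by_cases h' : ∃ v, g v = u'
        · obtain ⟨v, rfl⟩ := h; obtain ⟨v', rfl⟩ := h'
          rw [Hg, Hg] at hww
          rw [Sum.inl.inj hww]
        · obtain ⟨v, rfl⟩ := h
          rw [Hg, Hnog u' h'] at hww; cases hww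
        · obtain ⟨v', rfl⟩ := h'
          rw [Hnog u h, Hg] at hww; cases hww
        · rw [Hnog u h, Hnog u' h'] at hww
          have h2 := congrArg Subtype.val (Sum.inr.inj hww)
          exact e2.injective h2
      · by_cases h : ∃ v, g v = u
        · obtain ⟨v, rfl⟩ := h
          rw [Hg, Hinr] at hww; cases hww
        · rw [Hnog u h, Hinr] at hww
          have h2 := congrArg Subtype.val (Sum.inr.inj hww)
          exact absurd (e2.injective h2) Sum.inl_ne_inr
      · by_cases h' : ∃ v, g v = u'
        · obtain ⟨v', rfl⟩ := h'
          rw [Hinr, Hg] at hww; cases hww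
        · rw [Hinr, Hnog u' h'] at hww
          have h2 := congrArg Subtype.val (Sum.inr.inj hww)
          exact absurd (e2.injective h2) Sum.inr_ne_inl
      · rw [Hinr, Hinr] at hww
        have h2 := congrArg Subtype.val (Sum.inr.inj hww)
        exact e2.injective h2
    · rintro (v | ⟨r', hr'⟩)
      · exact ⟨Sum.inl (g v), Hg v⟩
      · rcases hw : e2.symm r' with u | b
        · have hr'e : e2 (Sum.inl u) = r' := by rw [← hw, Equiv.apply_symm_apply]
          have hno : ¬ ∃ v, g v = u := by
            rintro ⟨v, rfl⟩
            rw [hkey v] at hr'e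
            exact hr' (hr'e ▸ (m1.g ⟨v, hT v⟩).property)
          exact ⟨Sum.inl u, by rw [Hnog u hno]; exact congrArg Sum.inr (Subtype.ext hr'e)⟩
        · have hr'e : e2 (Sum.inr b) = r' := by rw [← hw, Equiv.apply_symm_apply]
          exact ⟨Sum.inr b, by rw [Hinr]; exact congrArg Sum.inr (Subtype.ext hr'e)⟩
  -- helper characterizations of the glue of the first starter
  have hll : ∀ v v', ((Uy.starter A).glue R' m1).lt (Sum.inl v) (Sum.inl v') ↔
      R'.lt (m1.g ⟨v, hT v⟩).val (m1.g ⟨v', hT v'⟩).val := by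
    intro v v'
    rw [glue_lt_inl_inl m1]
    constructor
    · rintro (h | ⟨h, h', hlt⟩)
      · exact absurd h (hDy v v')
      · exact hlt
    · intro hlt; exact Or.inr ⟨hT v, hT v', hlt⟩
  have hlr : ∀ v b, ((Uy.starter A).glue R' m1).lt (Sum.inl v) (Sum.inr b) ↔
      R'.lt (m1.g ⟨v, hT v⟩).val b.val := by
    intro v b
    rw [glue_lt_inl_inr m1]
    constructor
    · rintro (⟨h, hlt⟩ | hn)
      · exact hlt
      · exact absurd (hT v) hn
    · intro hlt; exact Or.inl ⟨hT v, hlt⟩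
  have hrl : ∀ b v, ((Uy.starter A).glue R' m1).lt (Sum.inr b) (Sum.inl v) ↔
      R'.lt b.val (m1.g ⟨v, hT v⟩).val := by
    intro b v
    rw [glue_lt_inr_inl m1]
    constructor
    · rintro ⟨h, hlt⟩; exact hlt
    · intro hlt; exact ⟨hT v, hlt⟩
  have hell : ∀ v v', ((Uy.starter A).glue R' m1).evord (Sum.inl v) (Sum.inl v') ↔
      R'.evord (m1.g ⟨v, hT v⟩).val (m1.g ⟨v', hT v'⟩).val := by
    intro v v'
    exact (glue_evord_inl_inl m1 v v').trans (m1.evord_iff ⟨v, hT v⟩ ⟨v', hT v'⟩)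
  have helr : ∀ v b, ((Uy.starter A).glue R' m1).evord (Sum.inl v) (Sum.inr b) ↔
      R'.evord (m1.g ⟨v, hT v⟩).val b.val := by
    intro v b
    rw [glue_evord_inl_inr m1]
    constructor
    · rintro ⟨h, he⟩; exact he
    · intro he; exact ⟨hT v, he⟩
  have herl : ∀ b v, ((Uy.starter A).glue R' m1).evord (Sum.inr b) (Sum.inl v) ↔
      R'.evord b.val (m1.g ⟨v, hT v⟩).val := by
    intro b v
    rw [glue_evord_inr_inl m1]
    constructor
    · rintro ⟨h, he⟩; exact he
    · intro he; exact ⟨hT v, he⟩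
  -- bridges between the two glues (same carrier, differing only in source interface)
  have hTN : ∀ u : Uy'.carrier, u ∈ (Uy'.starter (C ∪ g '' A)).T := fun u => Set.mem_univ u
  have hTC : ∀ u : Uy'.carrier, u ∈ (Uy'.starter C).T := fun u => Set.mem_univ u
  have hbrlt : ∀ w w',
      ((Uy'.starter (C ∪ g '' A)).glue R'' ⟨m2.g, m2.evord_iff, m2.lab_eq⟩).lt w w' ↔
      ((Uy'.starter C).glue R'' m2).lt w w' := by
    rintro (u | b) (u' | b')
    · exact (glue_lt_inl_inl _ u u').trans ((glue_lt_inl_inl m2 u u').symm)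
    · exact (glue_lt_inl_inr _ u b').trans ((glue_lt_inl_inr m2 u b').symm)
    · exact (glue_lt_inr_inl _ b u').trans ((glue_lt_inr_inl m2 b u').symm)
    · exact (glue_lt_inr_inr _ b b').trans ((glue_lt_inr_inr m2 b b').symm)
  have hbrev : ∀ w w',
      ((Uy'.starter (C ∪ g '' A)).glue R'' ⟨m2.g, m2.evord_iff, m2.lab_eq⟩).evord w w' ↔
      ((Uy'.starter C).glue R'' m2).evord w w' := by
    rintro (u | b) (u' | b')
    · refine (glue_evord_inl_inl _ u u').trans ((glue_evord_inl_inl m2 u u').symm)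
    · exact (glue_evord_inl_inr _ u b').trans ((glue_evord_inl_inr m2 u b').symm)
    · exact (glue_evord_inr_inl _ b u').trans ((glue_evord_inr_inl m2 b u').symm)
    · exact (glue_evord_inr_inr _ b b').trans ((glue_evord_inr_inr m2 b b').symm)
  have hbrT : ∀ w,
      w ∈ ((Uy'.starter (C ∪ g '' A)).glue R'' ⟨m2.g, m2.evord_iff, m2.lab_eq⟩).T ↔
      w ∈ ((Uy'.starter C).glue R'' m2).T := by
    rintro (u | b)
    · exact (glue_T_inl _ u (hTN u)).trans ((glue_T_inl m2 u (hTC u)).symm)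
    · exact (glue_T_inr _ b).trans ((glue_T_inr m2 b).symm)
  have hbrlab : ∀ w,
      ((Uy'.starter (C ∪ g '' A)).glue R'' ⟨m2.g, m2.evord_iff, m2.lab_eq⟩).lab w =
      ((Uy'.starter C).glue R'' m2).lab w := by
    rintro (u | b) <;> rfl
  refine ⟨(Equiv.ofBijective H hbij).trans e1, ?_, ?_, ?_, ?_, ?_⟩
  · -- lt
    intro w w'
    refine Iff.trans ((hbrlt w w').trans (e2lt w w')) (Iff.trans ?_ (e1lt (H w) (H w')))
    rcases w with u | b <;> rcases w' with u' | b'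
    · by_cases h : ∃ v, g v = u <;> by_cases h' : ∃ v, g v = u'
      · obtain ⟨v, rfl⟩ := h; obtain ⟨v', rfl⟩ := h'
        erw [Hg, Hg, hkey v, hkey v', hll]
      · obtain ⟨v, rfl⟩ := h
        erw [Hg, Hnog u' h', hkey v, hlr]; rfl
      · obtain ⟨v', rfl⟩ := h'
        erw [Hnog u h, Hg, hkey v', hrl]; rfl
      · erw [Hnog u h, Hnog u' h', glue_lt_inr_inr m1]; rfl
    · by_cases h : ∃ v, g v = u
      · obtain ⟨v, rfl⟩ := h
        erw [Hg, Hinr, hkey v, hlr]; rfl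
      · erw [Hnog u h, Hinr, glue_lt_inr_inr m1]; rfl
    · by_cases h' : ∃ v, g v = u'
      · obtain ⟨v', rfl⟩ := h'
        erw [Hinr, Hg, hkey v', hrl]; rfl
      · erw [Hinr, Hnog u' h', glue_lt_inr_inr m1]; rfl
    · erw [Hinr, Hinr, glue_lt_inr_inr m1]; rfl
  · -- evord
    intro w w'
    refine Iff.trans ((hbrev w w').trans (e2ev w w')) (Iff.trans ?_ (e1ev (H w) (H w')))
    rcases w with u | b <;> rcases w' with u' | b'
    · by_cases h : ∃ v, g v = u <;> by_cases h' : ∃ v, g v = u'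
      · obtain ⟨v, rfl⟩ := h; obtain ⟨v', rfl⟩ := h'
        erw [Hg, Hg, hkey v, hkey v', hell]
      · obtain ⟨v, rfl⟩ := h
        erw [Hg, Hnog u' h', hkey v, helr]; rfl
      · obtain ⟨v', rfl⟩ := h'
        erw [Hnog u h, Hg, hkey v', herl]; rfl
      · erw [Hnog u h, Hnog u' h', glue_evord_inr_inr m1]; rfl
    · by_cases h : ∃ v, g v = u
      · obtain ⟨v, rfl⟩ := h
        erw [Hg, Hinr, hkey v, helr]; rfl
      · erw [Hnog u h, Hinr, glue_evord_inr_inr m1]; rfl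
    · by_cases h' : ∃ v, g v = u'
      · obtain ⟨v', rfl⟩ := h'
        erw [Hinr, Hg, hkey v', herl]; rfl
      · erw [Hinr, Hnog u' h', glue_evord_inr_inr m1]; rfl
    · erw [Hinr, Hinr, glue_evord_inr_inr m1]; rfl
  · -- S
    intro w
    refine Iff.trans ?_ (e1S (H w))
    rcases w with u | b
    · erw [glue_S_inl]
      by_cases h : ∃ v, g v = u
      · obtain ⟨v, rfl⟩ := h
        erw [Hg, glue_S_inl m1]
        show g v ∈ (C ∪ g '' A)ᶜ ↔ v ∈ Aᶜ
        simp only [Set.mem_compl_iff, Set.mem_union, not_or]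
        constructor
        · rintro ⟨-, hgA⟩ hvA
          exact hgA ⟨v, hvA, rfl⟩
        · intro hvA
          refine ⟨hgC v, ?_⟩
          rintro ⟨v', hv'A, heq⟩
          exact hvA (ginj heq ▸ hv'A)
      · have hu : u ∈ C := by
          by_contra hc
          rw [show C = (Set.range g)ᶜ by rw [grange, compl_compl]] at hc
          erw [Set.notMem_compl_iff] at hc
          obtain ⟨v, hv⟩ := hc
          exact h ⟨v, hv⟩
        erw [Hnog u h]
        constructor
        · intro hmem
          exact absurd (Or.inl hu) hmem
        · intro hmem
          exact absurd hmem (glue_S_inr m1 _)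
    · erw [Hinr]
      constructor
      · intro hmem; exact absurd hmem (glue_S_inr _ _)
      · intro hmem; exact absurd hmem (glue_S_inr m1 _)
  · -- T
    intro w
    refine Iff.trans ((hbrT w).trans (e2T w)) (Iff.trans ?_ (e1T (H w)))
    rcases w with u | b
    · by_cases h : ∃ v, g v = u
      · obtain ⟨v, rfl⟩ := h
        erw [Hg, glue_T_inl m1 v (hT v), hkey v]
      · erw [Hnog u h, glue_T_inr m1]; rfl
    · erw [Hinr, glue_T_inr m1]; rfl
  · -- lab
    intro w
    refine Eq.trans (e1lab (H w)) (Eq.trans (Eq.trans ?_ (e2lab w)) (hbrlab w).symm)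
    rcases w with u | b
    · by_cases h : ∃ v, g v = u
      · obtain ⟨v, rfl⟩ := h
        erw [Hg, hkey v]
        exact (m1.lab_eq ⟨v, hT v⟩).symm
      · erw [Hnog u h]; rfl
    · erw [Hinr]; rfl

end UpMerge


section DownMerge

variable {σ : Type}

theorem down_merge {Uy Uz R'' R' R : PreIpomset σ}
    (hDy : Uy.Discrete) (hDz : Uz.Discrete)
    (B : Set Uy.carrier) (D : Set Uz.carrier)
    (hg1 : GlueRel (Uy.terminator B) R' R) (hg2 : GlueRel (Uz.terminator D) R'' R') :
    ∃ g : Uz.carrier → Uy.carrier,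
      Function.Injective g ∧ Set.range g = Bᶜ ∧
      (∀ u v, Uz.evord u v ↔ Uy.evord (g u) (g v)) ∧
      (∀ u, Uy.lab (g u) = Uz.lab u) ∧
      GlueRel (Uy.terminator (B ∪ g '' D)) R'' R := by
  obtain ⟨m1, e1, e1lt, e1ev, e1S, e1T, e1lab⟩ := hg1
  obtain ⟨m2, e2, e2lt, e2ev, e2S, e2T, e2lab⟩ := hg2
  have hSz : ∀ v : Uz.carrier, v ∈ (Uz.terminator D).S := fun v => Set.mem_univ v
  -- construct ψ : T_{⟨U,U,U∖B⟩} → Uz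
  have hspec : ∀ s : {u : Uy.carrier // u ∈ (Uy.terminator B).T},
      ∃ v : Uz.carrier, Sum.inl v = e2.symm ((m1.g s).val) := by
    intro s
    have hw : e2.symm ((m1.g s).val) ∈ ((Uz.terminator D).glue R'' m2).S := by
      have h2 := e2S (e2.symm ((m1.g s).val))
      rw [Equiv.apply_symm_apply] at h2
      exact h2.2 (m1.g s).property
    obtain ⟨a, ha, -⟩ := hw
    rcases hw' : e2.symm ((m1.g s).val) with v | b
    · exact ⟨v, rfl⟩
    · rw [hw'] at ha; cases ha
  choose ψ hψ using hspec
  have hkey : ∀ s, e2 (Sum.inl (ψ s)) = (m1.g s).val := by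
    intro s; erw [hψ s, Equiv.apply_symm_apply]
  have ψinj : Function.Injective ψ := by
    intro s t hst
    apply m1.g.injective
    apply Subtype.ext
    rw [← hkey s, ← hkey t, hst]
  have ψsurj : Function.Surjective ψ := by
    intro v
    have h1 : Sum.inl v ∈ ((Uz.terminator D).glue R'' m2).S := (glue_S_inl m2 v).2 (hSz v)
    have h2 : e2 (Sum.inl v) ∈ R'.S := (e2S _).1 h1
    obtain ⟨s, hs⟩ := m1.g.surjective ⟨e2 (Sum.inl v), h2⟩
    refine ⟨s, ?_⟩
    have h3 : e2 (Sum.inl (ψ s)) = e2 (Sum.inl v) := by rw [hkey s, hs]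
    exact Sum.inl.inj (e2.injective h3)
  -- the face embedding g is the inverse of ψ
  obtain ⟨gs, hgs1, hgs2⟩ :
      ∃ gs : Uz.carrier → {u : Uy.carrier // u ∈ (Uy.terminator B).T},
        (∀ s, gs (ψ s) = s) ∧ (∀ v, ψ (gs v) = v) := by
    refine ⟨fun v => (Equiv.ofBijective ψ ⟨ψinj, ψsurj⟩).symm v, ?_, ?_⟩
    · intro s; exact (Equiv.ofBijective ψ ⟨ψinj, ψsurj⟩).symm_apply_apply s
    · intro v; exact (Equiv.ofBijective ψ ⟨ψinj, ψsurj⟩).apply_symm_apply v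
  set g : Uz.carrier → Uy.carrier := fun v => (gs v).val with hgdef
  have hgT : ∀ v, g v ∈ (Uy.terminator B).T := fun v => (gs v).property
  have hgψ : ∀ s, g (ψ s) = s.val := fun s => congrArg Subtype.val (hgs1 s)
  have hψg : ∀ v, ψ ⟨g v, hgT v⟩ = v := by
    intro v
    have h1 : (⟨g v, hgT v⟩ : {u : Uy.carrier // u ∈ (Uy.terminator B).T}) = gs v :=
      Subtype.ext rfl
    rw [h1]; exact hgs2 v
  have ginj : Function.Injective g := by
    intro a b hab
    have h1 : gs a = gs b := Subtype.ext hab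
    rw [← hgs2 a, ← hgs2 b, h1]
  have grange : Set.range g = Bᶜ := by
    ext u
    constructor
    · rintro ⟨v, rfl⟩; exact hgT v
    · intro hu; exact ⟨ψ ⟨u, hu⟩, hgψ ⟨u, hu⟩⟩
  have gev : ∀ u v, Uz.evord u v ↔ Uy.evord (g u) (g v) := by
    intro u v
    have h1 := m1.evord_iff ⟨g u, hgT u⟩ ⟨g v, hgT v⟩
    have h2 := e2ev (Sum.inl (ψ ⟨g u, hgT u⟩)) (Sum.inl (ψ ⟨g v, hgT v⟩))
    rw [hkey, hkey, hψg, hψg] at h2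
    have h3 := glue_evord_inl_inl m2 u v
    exact h3.symm.trans (h2.trans h1.symm)
  have glab : ∀ v, Uy.lab (g v) = Uz.lab v := by
    intro v
    have h1 := m1.lab_eq ⟨g v, hgT v⟩
    have h2 := e2lab (Sum.inl (ψ ⟨g v, hgT v⟩))
    rw [hkey, hψg] at h2
    exact h1.symm.trans h2
  -- membership facts
  have hpf1 : ∀ s : {u : Uy.carrier // u ∈ (Uy.terminator (B ∪ g '' D)).T},
      s.val ∈ (Uy.terminator B).T := fun s hB => s.property (Or.inl hB)
  have hpf2 : ∀ s : {u : Uy.carrier // u ∈ (Uy.terminator (B ∪ g '' D)).T},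
      ψ ⟨s.val, hpf1 s⟩ ∈ (Uz.terminator D).T :=
    fun s hD => s.property (Or.inr ⟨ψ ⟨s.val, hpf1 s⟩, hD, hgψ ⟨s.val, hpf1 s⟩⟩)
  have huTN : ∀ u (hb : u ∈ (Uy.terminator B).T)
      (hd : ψ ⟨u, hb⟩ ∈ (Uz.terminator D).T), u ∈ (Uy.terminator (B ∪ g '' D)).T := by
    intro u hb hd hmem
    rcases hmem with hB | ⟨d, hdD, heq⟩
    · exact hb hB
    · subst heq
      have h1 : ψ ⟨g d, hb⟩ = d := hψg d
      exact hd (by rw [h1]; exact hdD)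
  -- the bijection underlying the new matching
  have hφbij : Function.Bijective
      (fun s : {u : Uy.carrier // u ∈ (Uy.terminator (B ∪ g '' D)).T} =>
        m2.g ⟨ψ ⟨s.val, hpf1 s⟩, hpf2 s⟩) := by
    constructor
    · intro s t hst
      have h1 := m2.g.injective hst
      have h2 := congrArg Subtype.val h1
      have h3 := ψinj h2
      have h4 := congrArg Subtype.val h3
      exact Subtype.ext h4
    · intro t
      obtain ⟨td, htd⟩ := m2.g.surjective t
      have hmem : g td.val ∈ (Uy.terminator (B ∪ g '' D)).T := by
        intro hmem'
        rcases hmem' with hB | ⟨d, hdD, heq⟩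
        · exact hgT td.val hB
        · exact td.property (ginj heq ▸ hdD)
      refine ⟨⟨g td.val, hmem⟩, ?_⟩
      rw [← htd]
      exact congrArg m2.g (Subtype.ext (hψg td.val))
  refine ⟨g, ginj, grange, gev, glab,
    ⟨Equiv.ofBijective _ hφbij, ?_, ?_⟩, ?_⟩
  · -- evord_iff of the matching
    intro s t
    have h1 := gev (ψ ⟨s.val, hpf1 s⟩) (ψ ⟨t.val, hpf1 t⟩)
    rw [hgψ, hgψ] at h1
    have h2 := m2.evord_iff ⟨ψ ⟨s.val, hpf1 s⟩, hpf2 s⟩ ⟨ψ ⟨t.val, hpf1 t⟩, hpf2 t⟩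
    exact h1.symm.trans h2
  · -- lab_eq of the matching
    intro s
    have h2 := m2.lab_eq ⟨ψ ⟨s.val, hpf1 s⟩, hpf2 s⟩
    have h3 := glab (ψ ⟨s.val, hpf1 s⟩)
    rw [hgψ] at h3
    exact h2.trans h3.symm
  -- the isomorphism
  have hpf4 : ∀ b : {r : R''.carrier // r ∉ R''.S}, e2 (Sum.inr b) ∉ R'.S := by
    intro b hmem
    exact glue_S_inr m2 b ((e2S _).2 hmem)
  set H : Uy.carrier ⊕ {r : R''.carrier // r ∉ R''.S} →
      Uy.carrier ⊕ {r : R'.carrier // r ∉ R'.S} :=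
    mergeFun (id : Uy.carrier → Uy.carrier) (fun u h => absurd ⟨u, rfl⟩ h)
      (fun b => ⟨e2 (Sum.inr b), hpf4 b⟩) with hH
  have Hid : ∀ u, H (Sum.inl u) = Sum.inl u := by
    intro u; rw [hH]; exact mergeFun_g Function.injective_id _ _ u
  have Hinr : ∀ b, H (Sum.inr b) = Sum.inr ⟨e2 (Sum.inr b), hpf4 b⟩ := by
    intro b; rw [hH]; exact mergeFun_inr _ _ _ b
  have hbij : Function.Bijective H := by
    constructor
    · rintro (u | b) (u' | b') hww
      · rw [Hid, Hid] at hww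
        rw [Sum.inl.inj hww]
      · rw [Hid, Hinr] at hww; cases hww
      · rw [Hinr, Hid] at hww; cases hww
      · rw [Hinr, Hinr] at hww
        have h2 := congrArg Subtype.val (Sum.inr.inj hww)
        have h3 := Sum.inr.inj (e2.injective h2)
        rw [h3]
    · rintro (u | ⟨r', hr'⟩)
      · exact ⟨Sum.inl u, Hid u⟩
      · rcases hw : e2.symm r' with v | b
        · exfalso
          have hr'e : e2 (Sum.inl v) = r' := by rw [← hw, Equiv.apply_symm_apply]
          have h1 : Sum.inl v ∈ ((Uz.terminator D).glue R'' m2).S :=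
            (glue_S_inl m2 v).2 (hSz v)
          exact hr' (hr'e ▸ (e2S _).1 h1)
        · have hr'e : e2 (Sum.inr b) = r' := by rw [← hw, Equiv.apply_symm_apply]
          exact ⟨Sum.inr b, by rw [Hinr]; exact congrArg Sum.inr (Subtype.ext hr'e)⟩
  -- translation lemmas from R' to R''
  have key_ll : ∀ s t : {u : Uy.carrier // u ∈ (Uy.terminator B).T},
      R'.lt (m1.g s).val (m1.g t).val ↔
        ∃ (hd : ψ s ∈ (Uz.terminator D).T) (hd' : ψ t ∈ (Uz.terminator D).T),
          R''.lt (m2.g ⟨ψ s, hd⟩).val (m2.g ⟨ψ t, hd'⟩).val := by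
    intro s t
    erw [← hkey s, ← hkey t, ← e2lt, glue_lt_inl_inl m2]
    constructor
    · rintro (hz | h)
      · exact absurd hz (hDz _ _)
      · exact h
    · exact Or.inr
  have key_lr : ∀ (s : {u : Uy.carrier // u ∈ (Uy.terminator B).T})
      (b : {r : R''.carrier // r ∉ R''.S}),
      R'.lt (m1.g s).val (e2 (Sum.inr b)) ↔
        ((∃ hd : ψ s ∈ (Uz.terminator D).T, R''.lt (m2.g ⟨ψ s, hd⟩).val b.val) ∨
          ψ s ∉ (Uz.terminator D).T) := by
    intro s b
    erw [← hkey s, ← e2lt]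
    exact glue_lt_inl_inr m2 (ψ s) b
  have key_rl : ∀ (b : {r : R''.carrier // r ∉ R''.S})
      (s : {u : Uy.carrier // u ∈ (Uy.terminator B).T}),
      R'.lt (e2 (Sum.inr b)) (m1.g s).val ↔
        ∃ hd : ψ s ∈ (Uz.terminator D).T, R''.lt b.val (m2.g ⟨ψ s, hd⟩).val := by
    intro b s
    erw [← hkey s, ← e2lt]
    exact glue_lt_inr_inl m2 b (ψ s)
  have key_rr : ∀ b b' : {r : R''.carrier // r ∉ R''.S},
      R'.lt (e2 (Sum.inr b)) (e2 (Sum.inr b')) ↔ R''.lt b.val b'.val := by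
    intro b b'
    erw [← e2lt]
    exact glue_lt_inr_inr m2 b b'
  have key_ev_lr : ∀ (s : {u : Uy.carrier // u ∈ (Uy.terminator B).T})
      (b : {r : R''.carrier // r ∉ R''.S}),
      R'.evord (m1.g s).val (e2 (Sum.inr b)) ↔
        ∃ hd : ψ s ∈ (Uz.terminator D).T, R''.evord (m2.g ⟨ψ s, hd⟩).val b.val := by
    intro s b
    erw [← hkey s, ← e2ev]
    exact glue_evord_inl_inr m2 (ψ s) b
  have key_ev_rl : ∀ (b : {r : R''.carrier // r ∉ R''.S})
      (s : {u : Uy.carrier // u ∈ (Uy.terminator B).T}),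
      R'.evord (e2 (Sum.inr b)) (m1.g s).val ↔
        ∃ hd : ψ s ∈ (Uz.terminator D).T, R''.evord b.val (m2.g ⟨ψ s, hd⟩).val := by
    intro b s
    erw [← hkey s, ← e2ev]
    exact glue_evord_inr_inl m2 b (ψ s)
  have key_ev_rr : ∀ b b' : {r : R''.carrier // r ∉ R''.S},
      R'.evord (e2 (Sum.inr b)) (e2 (Sum.inr b')) ↔ R''.evord b.val b'.val := by
    intro b b'
    erw [← e2ev]
    exact glue_evord_inr_inr m2 b b'
  have key_T_l : ∀ s : {u : Uy.carrier // u ∈ (Uy.terminator B).T},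
      (m1.g s).val ∈ R'.T ↔
        ∃ hd : ψ s ∈ (Uz.terminator D).T, (m2.g ⟨ψ s, hd⟩).val ∈ R''.T := by
    intro s
    erw [← hkey s, ← e2T]
    constructor
    · intro hmem
      by_cases hd : ψ s ∈ (Uz.terminator D).T
      · exact ⟨hd, (glue_T_inl m2 _ hd).1 hmem⟩
      · exact absurd hmem (glue_T_inl_not m2 _ hd)
    · rintro ⟨hd, hm⟩
      exact (glue_T_inl m2 _ hd).2 hm
  have key_T_r : ∀ b : {r : R''.carrier // r ∉ R''.S},
      e2 (Sum.inr b) ∈ R'.T ↔ b.val ∈ R''.T := by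
    intro b
    erw [← e2T]
    exact glue_T_inr m2 b
  have key_lab_l : ∀ s : {u : Uy.carrier // u ∈ (Uy.terminator B).T},
      R'.lab (m1.g s).val = Uz.lab (ψ s) := by
    intro s
    rw [← hkey s]
    exact e2lab (Sum.inl (ψ s))
  have key_lab_r : ∀ b : {r : R''.carrier // r ∉ R''.S},
      R'.lab (e2 (Sum.inr b)) = R''.lab b.val := fun b => e2lab (Sum.inr b)
  refine ⟨(Equiv.ofBijective H hbij).trans e1, ?_, ?_, ?_, ?_, ?_⟩
  · -- lt
    intro w w'
    refine Iff.trans ?_ (e1lt (H w) (H w'))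
    rcases w with u | b <;> rcases w' with u' | b'
    · erw [Hid u, Hid u', glue_lt_inl_inl, glue_lt_inl_inl m1]
      constructor
      · rintro (hz | ⟨h, h', hlt⟩)
        · exact absurd hz (hDy u u')
        · exact Or.inr ⟨hpf1 ⟨u, h⟩, hpf1 ⟨u', h'⟩,
            (key_ll ⟨u, hpf1 ⟨u, h⟩⟩ ⟨u', hpf1 ⟨u', h'⟩⟩).2
              ⟨hpf2 ⟨u, h⟩, hpf2 ⟨u', h'⟩, hlt⟩⟩
      · rintro (hz | ⟨h, h', hlt⟩)
        · exact absurd hz (hDy u u')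
        · obtain ⟨hd, hd', hlt'⟩ := (key_ll ⟨u, h⟩ ⟨u', h'⟩).1 hlt
          exact Or.inr ⟨huTN u h hd, huTN u' h' hd', hlt'⟩
    · erw [Hid u, Hinr b', glue_lt_inl_inr, glue_lt_inl_inr m1]
      constructor
      · rintro (⟨h, hlt⟩ | hn)
        · exact Or.inl ⟨hpf1 ⟨u, h⟩,
            (key_lr ⟨u, hpf1 ⟨u, h⟩⟩ b').2 (Or.inl ⟨hpf2 ⟨u, h⟩, hlt⟩)⟩
        · have hmem : u ∈ B ∪ g '' D := not_not.mp hn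
          rcases hmem with hB | ⟨d, hd, rfl⟩
          · exact Or.inr (fun hB' => hB' hB)
          · refine Or.inl ⟨hgT d, (key_lr ⟨g d, hgT d⟩ b').2 (Or.inr ?_)⟩
            rw [hψg d]
            exact fun hdc => hdc hd
      · rintro (⟨h, hlt⟩ | hn)
        · rcases (key_lr ⟨u, h⟩ b').1 hlt with ⟨hd, hlt'⟩ | hnd
          · exact Or.inl ⟨huTN u h hd, hlt'⟩
          · refine Or.inr (fun hTNu => ?_)
            exact hTNu (Or.inr ⟨ψ ⟨u, h⟩, not_not.mp hnd, hgψ ⟨u, h⟩⟩)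
        · exact Or.inr (fun hTNu => hTNu (Or.inl (not_not.mp hn)))
    · erw [Hinr b, Hid u', glue_lt_inr_inl, glue_lt_inr_inl m1]
      constructor
      · rintro ⟨h, hlt⟩
        exact ⟨hpf1 ⟨u', h⟩, (key_rl b ⟨u', hpf1 ⟨u', h⟩⟩).2 ⟨hpf2 ⟨u', h⟩, hlt⟩⟩
      · rintro ⟨h, hlt⟩
        obtain ⟨hd, hlt'⟩ := (key_rl b ⟨u', h⟩).1 hlt
        exact ⟨huTN u' h hd, hlt'⟩
    · erw [Hinr b, Hinr b', glue_lt_inr_inr, glue_lt_inr_inr m1]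
      exact (key_rr b b').symm
  · -- evord
    intro w w'
    refine Iff.trans ?_ (e1ev (H w) (H w'))
    rcases w with u | b <;> rcases w' with u' | b'
    · erw [Hid u, Hid u']
      exact (glue_evord_inl_inl _ u u').trans (glue_evord_inl_inl m1 u u').symm
    · erw [Hid u, Hinr b', glue_evord_inl_inr, glue_evord_inl_inr m1]
      constructor
      · rintro ⟨h, he⟩
        exact ⟨hpf1 ⟨u, h⟩, (key_ev_lr ⟨u, hpf1 ⟨u, h⟩⟩ b').2 ⟨hpf2 ⟨u, h⟩, he⟩⟩
      · rintro ⟨h, he⟩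
        obtain ⟨hd, he'⟩ := (key_ev_lr ⟨u, h⟩ b').1 he
        exact ⟨huTN u h hd, he'⟩
    · erw [Hinr b, Hid u', glue_evord_inr_inl, glue_evord_inr_inl m1]
      constructor
      · rintro ⟨h, he⟩
        exact ⟨hpf1 ⟨u', h⟩, (key_ev_rl b ⟨u', hpf1 ⟨u', h⟩⟩).2 ⟨hpf2 ⟨u', h⟩, he⟩⟩
      · rintro ⟨h, he⟩
        obtain ⟨hd, he'⟩ := (key_ev_rl b ⟨u', h⟩).1 he
        exact ⟨huTN u' h hd, he'⟩
    · erw [Hinr b, Hinr b', glue_evord_inr_inr, glue_evord_inr_inr m1]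
      exact (key_ev_rr b b').symm
  · -- S
    intro w
    refine Iff.trans ?_ (e1S (H w))
    rcases w with u | b
    · erw [Hid u, glue_S_inl]
    · erw [Hinr b]
      constructor
      · intro hm; exact absurd hm (glue_S_inr _ _)
      · intro hm; exact absurd hm (glue_S_inr m1 _)
  · -- T
    intro w
    refine Iff.trans ?_ (e1T (H w))
    rcases w with u | b
    · erw [Hid u]
      constructor
      · intro hm
        by_cases h : u ∈ (Uy.terminator (B ∪ g '' D)).T
        · have h2 := (glue_T_inl _ u h).1 hm
          exact (glue_T_inl m1 u (hpf1 ⟨u, h⟩)).2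
            ((key_T_l ⟨u, hpf1 ⟨u, h⟩⟩).2 ⟨hpf2 ⟨u, h⟩, h2⟩)
        · exact absurd hm (glue_T_inl_not _ u h)
      · intro hm
        by_cases h : u ∈ (Uy.terminator B).T
        · have h2 := (glue_T_inl m1 u h).1 hm
          obtain ⟨hd, h3⟩ := (key_T_l ⟨u, h⟩).1 h2
          exact (glue_T_inl _ u (huTN u h hd)).2 h3
        · exact absurd hm (glue_T_inl_not m1 u h)
    · erw [Hinr b]
      exact (glue_T_inr _ b).trans
        ((key_T_r b).symm.trans (glue_T_inr m1 ⟨e2 (Sum.inr b), hpf4 b⟩).symm)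
  · -- lab
    intro w
    refine Eq.trans (e1lab (H w)) ?_
    rcases w with u | b
    · erw [Hid u]; rfl
    · erw [Hinr b]
      exact key_lab_r b

end DownMerge


/-- For every path `α` in a partial HDA `X` there is a sparse path `β`
with the same source and target recognizing the same ipomset. -/
theorem sparse_path_exists {σ : Type} [Finite σ] (X : PrePHDA σ) (hX : X.IsPHDA)
    {x z : X.cell} (α : PrePHDA.Path X x z) (R : PreIpomset σ) (hα : PrePHDA.Rec α R) :
    ∃ β : PrePHDA.Path X x z, β.Sparse ∧ PrePHDA.Rec β R := by
  induction α generalizing R with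
  | nil x0 =>
    exact ⟨PrePHDA.Path.nil x0, List.isChain_nil, hα⟩
  | @up x z y A h rest ih =>
    cases hα with
    | @up _ _ _ _ _ _ R' _ hrest hglue =>
    obtain ⟨β, hβs, hβrec⟩ := ih R' hrest
    cases β with
    | nil =>
      refine ⟨PrePHDA.Path.up _ A h (PrePHDA.Path.nil _), ?_,
        PrePHDA.Rec.up _ A h _ hβrec hglue⟩
      show List.Chain' (· ≠ ·) [true]
      exact List.isChain_singleton true
    | @up _ _ y₁ C h₁ β₂ =>
      cases hβrec with
      | @up _ _ _ _ _ _ R'' _ hrec₂ hglue₂ =>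
      obtain ⟨g, ginj, grange, gevv, glabb, hglueN⟩ :=
        up_merge ((hX.1 y).2.1) A C hglue hglue₂
      have hembed : IsFaceEmbed (X.ev y₁) (C ∪ ∅) (X.ev y) g :=
        ⟨ginj, by rw [Set.union_empty]; exact grange, gevv, glabb⟩
      have h'' := hX.2.2.2 y₁ C ∅ _ h₁ g hembed A ∅ _ h
      rw [Set.image_empty, Set.union_empty] at h''
      refine ⟨PrePHDA.Path.up y₁ (C ∪ g '' A) h'' β₂, ?_,
        PrePHDA.Rec.up y₁ (C ∪ g '' A) h'' β₂ hrec₂ hglueN⟩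
      show List.Chain' (· ≠ ·) (true :: β₂.dirs)
      exact hβs
    | @down _ _ _ B₁ h₁ β₂ =>
      refine ⟨PrePHDA.Path.up _ A h (PrePHDA.Path.down _ B₁ h₁ β₂), ?_,
        PrePHDA.Rec.up _ A h _ hβrec hglue⟩
      show List.Chain' (· ≠ ·) (true :: false :: β₂.dirs)
      exact List.isChain_cons_cons.mpr ⟨by decide, hβs⟩
  | @down z₁ z y B h rest ih =>
    cases hα with
    | @down _ _ _ _ _ _ R' _ hrest hglue =>
    obtain ⟨β, hβs, hβrec⟩ := ih R' hrest
    cases β with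
    | nil =>
      refine ⟨PrePHDA.Path.down _ B h (PrePHDA.Path.nil _), ?_,
        PrePHDA.Rec.down _ B h _ hβrec hglue⟩
      show List.Chain' (· ≠ ·) [false]
      exact List.isChain_singleton false
    | @up _ _ y₂ C h₂ β₂ =>
      refine ⟨PrePHDA.Path.down _ B h (PrePHDA.Path.up _ C h₂ β₂), ?_,
        PrePHDA.Rec.down _ B h _ hβrec hglue⟩
      show List.Chain' (· ≠ ·) (false :: true :: β₂.dirs)
      exact List.isChain_cons_cons.mpr ⟨by decide, hβs⟩
    | @down z₂ _ _ D h₂ β₂ =>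
      cases hβrec with
      | @down _ _ _ _ _ _ R'' _ hrec₂ hglue₂ =>
      obtain ⟨g, ginj, grange, gevv, glabb, hglueN⟩ :=
        down_merge ((hX.1 y).2.1) ((hX.1 z₁).2.1) B D hglue hglue₂
      have hembed : IsFaceEmbed (X.ev y) (∅ ∪ B) (X.ev z₁) g :=
        ⟨ginj, by rw [Set.empty_union]; exact grange, gevv, glabb⟩
      have h'' := hX.2.2.2 y ∅ B z₁ h g hembed ∅ D _ h₂
      rw [Set.image_empty, Set.union_empty] at h''
      refine ⟨PrePHDA.Path.down y (B ∪ g '' D) h'' β₂, ?_,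
        PrePHDA.Rec.down y (B ∪ g '' D) h'' β₂ hrec₂ hglueN⟩
      show List.Chain' (· ≠ ·) (false :: β₂.dirs)
      exact hβs

end HDA
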